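/- Let H1, H2, H3 be complex Hilbert spaces, let A ∈ L(H2,H3) and B ∈ L(H1,H3) be bounded operators with AA* ≥ BB*, and let X ∈ L(H1,H2). Then the following are equivalent: (i) AX = B and ‖X‖ ≤ 1; (ii) the 3×3 block operator [[I_{H1}, B*, X*],[B, AA*, A],[X, A*, I_{H2}]] acting on H1 ⊕ H3 ⊕ H2 is positive semidefinite. -/

import Mathlib

open ContinuousLinearMap
open scoped InnerProductSpace ComplexOrder

lemma key_id
    {H1 H2 H3 : Type*}
    [NormedAddCommGroup H1] [InnerProductSpace ℂ H1] [CompleteSpace H1]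
    [NormedAddCommGroup H2] [InnerProductSpace ℂ H2] [CompleteSpace H2]
    [NormedAddCommGroup H3] [InnerProductSpace ℂ H3] [CompleteSpace H3]
    (A : H2 →L[ℂ] H3) (B : H1 →L[ℂ] H3) (X : H1 →L[ℂ] H2)
    (h1 : H1) (h3 : H3) (h2 : H2) :
    ⟪h1, h1 + adjoint B h3 + adjoint X h2⟫_ℂ
      + ⟪h3, B h1 + A (adjoint A h3) + A h2⟫_ℂ
      + ⟪h2, X h1 + adjoint A h3 + h2⟫_ℂ
    = ⟪adjoint A h3 + h2 + X h1, adjoint A h3 + h2 + X h1⟫_ℂ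
      + ⟪h1, h1⟫_ℂ - ⟪X h1, X h1⟫_ℂ
      + ⟪h3, B h1 - A (X h1)⟫_ℂ + ⟪B h1 - A (X h1), h3⟫_ℂ := by
  simp only [inner_add_left, inner_add_right, inner_sub_left, inner_sub_right,
    adjoint_inner_left, adjoint_inner_right, map_sub, map_add]
  rw [← adjoint_inner_left A (adjoint A h3) h3, ← adjoint_inner_right A (adjoint A h3) h3]
  ring


/-- Let `H1, H2, H3` be complex Hilbert spaces, `A ∈ L(H2,H3)`,
`B ∈ L(H1,H3)` with `AA* ≥ BB*`, and `X ∈ L(H1,H2)`.  Then `AX = B` and `‖X‖ ≤ 1`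
hold if and only if the `3×3` block operator
`[[I, B*, X*], [B, AA*, A], [X, A*, I]]` on `H1 ⊕ H3 ⊕ H2` is positive semidefinite
(expressed here through nonnegativity of the associated quadratic form). -/
theorem stmt0
    {H1 H2 H3 : Type*}
    [NormedAddCommGroup H1] [InnerProductSpace ℂ H1] [CompleteSpace H1]
    [NormedAddCommGroup H2] [InnerProductSpace ℂ H2] [CompleteSpace H2]
    [NormedAddCommGroup H3] [InnerProductSpace ℂ H3] [CompleteSpace H3]
    (A : H2 →L[ℂ] H3) (B : H1 →L[ℂ] H3)
    (hAB : (A ∘L adjoint A - B ∘L adjoint B).IsPositive)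
    (X : H1 →L[ℂ] H2) :
    (A ∘L X = B ∧ ‖X‖ ≤ 1) ↔
      (∀ (h1 : H1) (h3 : H3) (h2 : H2),
        0 ≤ ⟪h1, h1 + adjoint B h3 + adjoint X h2⟫_ℂ
            + ⟪h3, B h1 + A (adjoint A h3) + A h2⟫_ℂ
            + ⟪h2, X h1 + adjoint A h3 + h2⟫_ℂ) := by
  constructor
  · rintro ⟨hAX, hX⟩ h1 h3 h2
    rw [key_id]
    have hd : B h1 - A (X h1) = 0 := by
      rw [← hAX]; simp [comp_apply]
    rw [hd]
    simp only [inner_zero_left, inner_zero_right, add_zero]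
    rw [inner_self_eq_norm_sq_to_K, inner_self_eq_norm_sq_to_K, inner_self_eq_norm_sq_to_K]
    have hXh1 : ‖X h1‖ ≤ ‖h1‖ := by
      calc ‖X h1‖ ≤ ‖X‖ * ‖h1‖ := le_opNorm X h1
        _ ≤ 1 * ‖h1‖ := by
            exact mul_le_mul_of_nonneg_right hX (norm_nonneg _)
        _ = ‖h1‖ := one_mul _
    have : (0:ℝ) ≤ ‖adjoint A h3 + h2 + X h1‖^2 + ‖h1‖^2 - ‖X h1‖^2 := by
      nlinarith [sq_nonneg ‖adjoint A h3 + h2 + X h1‖, norm_nonneg (X h1), norm_nonneg h1]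
    have := Complex.zero_le_real.mpr this
    push_cast at this ⊢
    convert this using 2 <;> push_cast <;> rfl
  · intro hQ
    have hXle : ∀ y : H1, ‖X y‖ ≤ ‖y‖ := by
      intro y
      have h := hQ y 0 (-(X y))
      rw [key_id] at h
      simp only [map_zero, zero_add, neg_add_cancel, inner_zero_left, inner_zero_right,
        add_zero, zero_sub] at h
      rw [inner_self_eq_norm_sq_to_K, inner_self_eq_norm_sq_to_K] at h
      have h' : (0:ℝ) ≤ ‖y‖^2 - ‖X y‖^2 := by
        rw [← Complex.zero_le_real]
        push_cast
        convert h using 2 <;> push_cast <;> rfl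
      nlinarith [norm_nonneg (X y), norm_nonneg y]
    have hd : ∀ y : H1, B y - A (X y) = 0 := by
      intro y
      by_contra hdne
      set d := B y - A (X y) with hd_def
      have hdpos : (0:ℝ) < ‖d‖^2 := pow_pos (norm_pos_iff.mpr hdne) 2
      set t : ℝ := -(‖y‖^2 + 1) / (2 * ‖d‖^2) with ht_def
      have h := hQ y ((t:ℂ) • d) (-(adjoint A ((t:ℂ) • d)) - X y)
      rw [key_id] at h
      have hzero : adjoint A ((t:ℂ) • d) + (-(adjoint A ((t:ℂ) • d)) - X y) + X y = 0 := by
        abel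
      rw [hzero] at h
      simp only [inner_zero_left, zero_add] at h
      rw [inner_smul_left, inner_smul_right, Complex.conj_ofReal,
        inner_self_eq_norm_sq_to_K, inner_self_eq_norm_sq_to_K,
        inner_self_eq_norm_sq_to_K] at h
      have h' : (0:ℝ) ≤ ‖y‖^2 - ‖X y‖^2 + t * ‖d‖^2 + t * ‖d‖^2 := by
        rw [← Complex.zero_le_real]
        push_cast
        convert h using 2 <;> push_cast <;> rfl
      have ht : t * ‖d‖^2 + t * ‖d‖^2 = -(‖y‖^2 + 1) := by
        rw [ht_def]
        field_simp [hdpos.ne']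
        ring
      linarith [sq_nonneg ‖X y‖]
    constructor
    · ext y
      have h := sub_eq_zero.mp (hd y)
      simpa [comp_apply] using h.symm
    · refine opNorm_le_bound X zero_le_one (fun y => ?_)
      simpa using hXle y
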